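/- Let x ∈ [-1,1] and define A = { (λ_1 + λ_2 - 2x)/(λ_1 λ_2 - 1) : λ_1, λ_2 ∈ D }. Then A is a simply connected open subset of ℂ. -/

import Mathlib

open Metric

namespace AOpenSC
open Complex

lemma denom_ne (l1 l2 : ℂ) (h1 : ‖l1‖ < 1) (h2 : ‖l2‖ < 1) : l1 * l2 - 1 ≠ 0 := by
  intro h
  have : l1 * l2 = 1 := by linear_combination h
  have h' : ‖l1 * l2‖ < 1 := by
    calc ‖l1 * l2‖ = ‖l1‖ * ‖l2‖ := norm_mul _ _
    _ < 1 := by nlinarith [norm_nonneg l1, norm_nonneg l2]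
  rw [this] at h'; simp at h'

lemma normsq_lt_one {l : ℂ} (h : ‖l‖ < 1) : normSq l < 1 := by
  have : normSq l = ‖l‖ ^ 2 := by rw [← Complex.sq_norm]
  rw [this]
  nlinarith [norm_nonneg l]

lemma one_sub_ne {l : ℂ} (h : ‖l‖ < 1) : (1:ℂ) - l ≠ 0 := by
  intro hl
  have : l = 1 := by linear_combination -hl
  rw [this] at h; simp at h

lemma add_I_ne {z : ℂ} (hz : 0 < z.im) : z + Complex.I ≠ 0 := by
  intro h
  have : (z + Complex.I).im = 0 := by rw [h]; simp
  simp at this; linarith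

lemma im_cayley {l : ℂ} (h : ‖l‖ < 1) : 0 < (Complex.I * (1 + l) / (1 - l)).im := by
  have h1 : (1 : ℂ) - l ≠ 0 := one_sub_ne h
  have hn : 0 < normSq (1 - l) := normSq_pos.2 h1
  have hsq := normsq_lt_one h
  rw [Complex.div_im]
  have e1 : (Complex.I * (1 + l)).im = 1 + l.re := by simp
  have e2 : (Complex.I * (1 + l)).re = -l.im := by simp
  rw [e1, e2]
  rw [div_sub_div_same, lt_div_iff₀ hn]
  simp only [Complex.sub_re, Complex.sub_im, Complex.one_re, Complex.one_im, normSq_apply] at *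
  nlinarith [hsq]

lemma cayley_mem {z : ℂ} (hz : 0 < z.im) : ‖(z - Complex.I) / (z + Complex.I)‖ < 1 := by
  have h1 : normSq (z - Complex.I) < normSq (z + Complex.I) := by
    simp [normSq_apply, Complex.sub_re, Complex.sub_im, Complex.add_re, Complex.add_im]
    nlinarith
  have h2 : z + Complex.I ≠ 0 := add_I_ne hz
  have h3 : 0 < ‖z + Complex.I‖ := norm_pos_iff.2 h2
  rw [norm_div, div_lt_one h3]
  have := Real.sqrt_lt_sqrt (normSq_nonneg _) h1
  rwa [← Complex.norm_def, ← Complex.norm_def]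
    at this

lemma ident2 (x : ℝ) (z1 z2 : ℂ) (h1 : z1 + Complex.I ≠ 0) (h2 : z2 + Complex.I ≠ 0)
    (h3 : (z1 - Complex.I) / (z1 + Complex.I) * ((z2 - Complex.I) / (z2 + Complex.I)) - 1 ≠ 0)
    (h12 : z1 + z2 ≠ 0) :
    ((z1 - Complex.I) / (z1 + Complex.I) + (z2 - Complex.I) / (z2 + Complex.I) - 2 * (x : ℂ)) /
      ((z1 - Complex.I) / (z1 + Complex.I) * ((z2 - Complex.I) / (z2 + Complex.I)) - 1) =
      (x : ℂ) + Complex.I * (((1 - x) * z1 * z2 + (1 + x)) / (z1 + z2)) := by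
  have h3' : (z1 - Complex.I) * (z2 - Complex.I) - (z1 + Complex.I) * (z2 + Complex.I) ≠ 0 := by
    intro h
    apply h3
    rw [div_mul_div_comm, sub_eq_zero, div_eq_one_iff_eq (mul_ne_zero h1 h2)]
    linear_combination h
  have e : (z1 - Complex.I) * (z2 - Complex.I) - (z1 + Complex.I) * (z2 + Complex.I)
      = -2 * Complex.I * (z1 + z2) := by ring
  have lhs_eq : ((z1 - Complex.I) / (z1 + Complex.I) + (z2 - Complex.I) / (z2 + Complex.I) - 2 * (x : ℂ)) /
      ((z1 - Complex.I) / (z1 + Complex.I) * ((z2 - Complex.I) / (z2 + Complex.I)) - 1)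
      = ((z1 - Complex.I) * (z2 + Complex.I) + (z2 - Complex.I) * (z1 + Complex.I)
          - 2 * (x:ℂ) * ((z1 + Complex.I) * (z2 + Complex.I))) /
        ((z1 - Complex.I) * (z2 - Complex.I) - (z1 + Complex.I) * (z2 + Complex.I)) := by
    rw [div_eq_div_iff h3 h3']
    field_simp
    try ring
    try simp
  rw [lhs_eq, e]
  have hI : (-2 : ℂ) * Complex.I ≠ 0 := by simp [Complex.I_ne_zero]
  rw [div_eq_iff (mul_ne_zero hI h12)]
  field_simp
  ring_nf
  simp only [Complex.I_sq]
  ring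

lemma cayley_inv (l : ℂ) (h : (1:ℂ) - l ≠ 0) :
    (Complex.I * (1 + l) / (1 - l) - Complex.I) / (Complex.I * (1 + l) / (1 - l) + Complex.I) = l := by
  have ha : Complex.I * (1 + l) / (1 - l) - Complex.I = 2 * Complex.I * l / (1 - l) := by
    field_simp; ring
  have hb : Complex.I * (1 + l) / (1 - l) + Complex.I = 2 * Complex.I / (1 - l) := by
    field_simp; ring
  rw [ha, hb, div_div_div_comm, div_self h, div_one, mul_comm,
    mul_div_assoc, div_self (by simp [Complex.I_ne_zero] : (2:ℂ) * Complex.I ≠ 0), mul_one]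

lemma mem_of_root (x : ℝ) (w F z : ℂ) (hw : w = (x:ℂ) + Complex.I * F) (hz : 0 < z.im)
    (heq : (1 - (x:ℂ)) * z ^ 2 + (1 + (x:ℂ)) = 2 * F * z) :
    ∃ lam1 ∈ ball (0:ℂ) 1, ∃ lam2 ∈ ball (0:ℂ) 1,
      w = (lam1 + lam2 - 2 * (x : ℂ)) / (lam1 * lam2 - 1) := by
  have hl : ‖(z - Complex.I) / (z + Complex.I)‖ < 1 := cayley_mem hz
  have hzi : z + Complex.I ≠ 0 := add_I_ne hz
  have hzz : z + z ≠ 0 := by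
    intro h
    have : (z + z).im = 0 := by rw [h]; simp
    simp at this; linarith
  refine ⟨_, mem_ball_zero_iff.2 hl, _, mem_ball_zero_iff.2 hl, ?_⟩
  rw [ident2 x z z hzi hzi (denom_ne _ _ hl hl) hzz]
  rw [hw]
  have hFe : ((1 - (x:ℂ)) * z * z + (1 + (x:ℂ)))/(z+z) = F := by
    rw [div_eq_iff hzz]
    linear_combination heq
  rw [hFe]

lemma fwd (x : ℝ) (l1 l2 : ℂ) (h1 : ‖l1‖ < 1) (h2 : ‖l2‖ < 1) :
    ∃ z1 z2 : ℂ, 0 < z1.im ∧ 0 < z2.im ∧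
      (l1 + l2 - 2 * (x:ℂ)) / (l1 * l2 - 1) =
        (x:ℂ) + Complex.I * (((1 - (x:ℂ)) * z1 * z2 + (1 + (x:ℂ))) / (z1 + z2)) := by
  obtain ⟨z1, hz1⟩ : ∃ z, z = Complex.I * (1 + l1) / (1 - l1) := ⟨_, rfl⟩
  obtain ⟨z2, hz2⟩ : ∃ z, z = Complex.I * (1 + l2) / (1 - l2) := ⟨_, rfl⟩
  have i1 : 0 < z1.im := by rw [hz1]; exact im_cayley h1
  have i2 : 0 < z2.im := by rw [hz2]; exact im_cayley h2
  have c1 : (z1 - Complex.I) / (z1 + Complex.I) = l1 := by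
    rw [hz1]; exact cayley_inv l1 (one_sub_ne h1)
  have c2 : (z2 - Complex.I) / (z2 + Complex.I) = l2 := by
    rw [hz2]; exact cayley_inv l2 (one_sub_ne h2)
  have h12 : z1 + z2 ≠ 0 := by
    intro h
    have : (z1 + z2).im = 0 := by rw [h]; simp
    simp at this; linarith
  refine ⟨z1, z2, i1, i2, ?_⟩
  conv_lhs => rw [← c1, ← c2]
  exact ident2 x z1 z2 (add_I_ne i1) (add_I_ne i2)
    (by rw [c1, c2]; exact denom_ne _ _ h1 h2) h12

lemma no_roots_aux (x p q s t Fim : ℝ) (hx1 : -1 < x) (hx2 : x < 1)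
    (hre : (1-x)*(p*s - q*t) = 1+x) (him : p*t + q*s = 0)
    (hsum : (1-x)*(q+t) = 2*Fim) (hFim : Fim ≠ 0)
    (hq : q ≤ 0) (ht : t ≤ 0) : False := by
  have ha : (0:ℝ) < 1 - x := by linarith
  have hb : (0:ℝ) < 1 + x := by linarith
  have hqt0 : 0 ≤ q * t := by nlinarith
  have hps : 0 < p * s := by nlinarith [mul_nonneg ha.le hqt0]
  have e1 : p * t = -(q * s) := by linarith
  have hqt : q * t ≤ 0 := by
    by_contra h0
    push_neg at h0
    have h1 : 0 < (p*s) * (q*t) := mul_pos hps h0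
    have h2 : (p*s)*(q*t) = (p*t)*(q*s) := by ring
    rw [e1] at h2
    nlinarith [sq_nonneg (q*s)]
  have hqt' : q * t = 0 := le_antisymm hqt hqt0
  have hsum_ne : q + t ≠ 0 := by
    intro h; apply hFim; nlinarith
  rcases mul_eq_zero.1 hqt' with h0 | h0
  · have ht' : t ≠ 0 := by intro h; apply hsum_ne; rw [h0, h]; ring
    have hp : p = 0 := by
      have : p * t = 0 := by rw [e1, h0]; ring
      rcases mul_eq_zero.1 this with h | h
      · exact h
      · exact absurd h ht'
    rw [hp] at hps; simp at hps
  · have hq' : q ≠ 0 := by intro h; apply hsum_ne; rw [h0, h]; ring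
    have hs : s = 0 := by
      have : q * s = 0 := by nlinarith [e1]
      rcases mul_eq_zero.1 this with h | h
      · exact absurd h hq'
      · exact h
    rw [hs] at hps; simp at hps

lemma key_lt (x : ℝ) (hx1 : -1 < x) (hx2 : x < 1) (z1 z2 : ℂ) (h1 : 0 < z1.im) (h2 : 0 < z2.im)
    (F : ℝ) (hF : (1 - (x:ℂ)) * z1 * z2 + (1 + (x:ℂ)) = (F : ℂ) * (z1 + z2)) :
    F ^ 2 < 1 - x ^ 2 := by
  have C1 := congrArg Complex.re hF
  have C2 := congrArg Complex.im hF
  simp only [Complex.mul_re, Complex.mul_im, Complex.add_re, Complex.add_im, Complex.sub_re,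
    Complex.sub_im, Complex.one_re, Complex.one_im, Complex.ofReal_re, Complex.ofReal_im] at C1 C2
  have key : z2.im * (((1-x) * z1.re - F)^2 + ((1-x) * z1.im)^2)
      = ((1-x)*(1+x) - F^2) * z1.im := by
    linear_combination ((1-x)*z1.re - F) * C2 - (1-x)*z1.im * C1
  have h4 : 0 < ((1-x) * z1.im)^2 := pow_pos (mul_pos (by linarith) h1) 2
  have hfront : 0 < ((1-x) * z1.re - F)^2 + ((1-x) * z1.im)^2 := by
    nlinarith [sq_nonneg ((1-x) * z1.re - F)]
  nlinarith [mul_pos h2 hfront]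

lemma root_exists (x : ℝ) (hx1 : -1 < x) (hx2 : x < 1) (F : ℂ) (hF : F.im ≠ 0) :
    ∃ z : ℂ, 0 < z.im ∧ (1 - (x:ℂ)) * z ^ 2 + (1 + (x:ℂ)) = 2 * F * z := by
  have ha : (0:ℝ) < 1 - x := by linarith
  have hα1 : (1:ℂ) - (x:ℂ) ≠ 0 := by
    intro h
    have := congrArg Complex.re h
    simp at this; linarith
  have hd : F ^ 2 - (1 - (x:ℂ)^2) ≠ 0 := by
    intro h
    rw [sub_eq_zero] at h
    have hre := congrArg Complex.re h
    have him := congrArg Complex.im h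
    simp only [Complex.mul_re, Complex.mul_im, Complex.sub_re, Complex.sub_im, Complex.one_re,
      Complex.one_im, Complex.ofReal_re, Complex.ofReal_im, pow_two] at hre him
    have hre0 : F.re = 0 := by
      rcases mul_eq_zero.1 (show F.re * F.im = 0 by linarith) with h' | h'
      · exact h'
      · exact absurd h' hF
    nlinarith [sq_nonneg F.im]
  set c : ℂ := (F ^ 2 - (1 - (x:ℂ)^2)) ^ ((1:ℂ)/2) with hcdef
  have hc : c ^ 2 = F ^ 2 - (1 - (x:ℂ)^2) := by
    rw [hcdef, sq, ← Complex.cpow_add _ _ hd]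
    norm_num
  have hroot : ∀ s : ℂ, s ^ 2 = F ^ 2 - (1 - (x:ℂ)^2) →
      (1 - (x:ℂ)) * ((F + s)/(1 - (x:ℂ))) ^ 2 + (1 + (x:ℂ)) = 2 * F * ((F + s)/(1 - (x:ℂ))) := by
    intro s hs
    field_simp
    linear_combination hs
  set u : ℂ := (F + c)/(1 - (x:ℂ)) with hudef
  set v : ℂ := (F - c)/(1 - (x:ℂ)) with hvdef
  have hu : (1 - (x:ℂ)) * u ^ 2 + (1 + (x:ℂ)) = 2 * F * u := hroot c hc
  have hv : (1 - (x:ℂ)) * v ^ 2 + (1 + (x:ℂ)) = 2 * F * v := by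
    have := hroot (-c) (by rw [neg_pow]; simp [hc])
    rw [hvdef]
    have e : F + -c = F - c := by ring
    rwa [e] at this
  have huv : (1 - (x:ℂ)) * (u * v) = 1 + (x:ℂ) := by
    rw [hudef, hvdef]
    field_simp
    linear_combination -hc
  have hsum : (1 - (x:ℂ)) * (u + v) = 2 * F := by
    rw [hudef, hvdef]
    field_simp
    ring
  rcases lt_or_ge 0 u.im with h | h
  · exact ⟨u, h, hu⟩
  rcases lt_or_ge 0 v.im with h' | h'
  · exact ⟨v, h', hv⟩
  exfalso
  have hre := congrArg Complex.re huv
  have him := congrArg Complex.im huv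
  have hsum_im := congrArg Complex.im hsum
  simp only [Complex.mul_re, Complex.mul_im, Complex.add_re, Complex.add_im, Complex.sub_re,
    Complex.sub_im, Complex.one_re, Complex.one_im, Complex.ofReal_re, Complex.ofReal_im,
    Complex.re_ofNat, Complex.im_ofNat] at hre him hsum_im
  exact no_roots_aux x u.re u.im v.re v.im F.im hx1 hx2 (by nlinarith [hre]) (by nlinarith [him])
    (by nlinarith [hsum_im]) hF h h'

end AOpenSC

open AOpenSC Complex in
/-- For `x ∈ [-1,1]`, the set `A = {(λ₁+λ₂-2x)/(λ₁λ₂-1) : λ₁, λ₂ ∈ 𝔻}` is a simply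
connected open subset of `ℂ`. -/
theorem A_open_simplyConnected (x : ℝ) (hx : x ∈ Set.Icc (-1 : ℝ) 1)
    (A : Set ℂ)
    (hA : A = {w | ∃ lam1 ∈ ball (0 : ℂ) 1, ∃ lam2 ∈ ball (0 : ℂ) 1,
      w = (lam1 + lam2 - 2 * (x : ℂ)) / (lam1 * lam2 - 1)}) :
    IsOpen A ∧ SimplyConnectedSpace A := by
  subst hA
  obtain ⟨hxm, hxp⟩ := hx
  rcases eq_or_lt_of_le hxp with hx1 | hx1
  · -- x = 1
    subst hx1
    have hAS : {w : ℂ | ∃ lam1 ∈ ball (0 : ℂ) 1, ∃ lam2 ∈ ball (0 : ℂ) 1,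
        w = (lam1 + lam2 - 2 * ((1:ℝ) : ℂ)) / (lam1 * lam2 - 1)} = {w : ℂ | 1 < w.re} := by
      ext w
      constructor
      · rintro ⟨l1, hl1, l2, hl2, hw⟩
        obtain ⟨z1, z2, i1, i2, heq⟩ := fwd 1 l1 l2 (mem_ball_zero_iff.1 hl1) (mem_ball_zero_iff.1 hl2)
        have h12 : z1 + z2 ≠ 0 := by
          intro h
          have : (z1 + z2).im = 0 := by rw [h]; simp
          simp at this; linarith
        have hwz : w = 1 + Complex.I * (2 / (z1 + z2)) := by
          rw [hw, heq]; push_cast; ring_nf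
        have hnsq : 0 < Complex.normSq (z1 + z2) := Complex.normSq_pos.2 h12
        have him : ((2:ℂ) / (z1 + z2)).im < 0 := by
          rw [Complex.div_im]
          simp only [Complex.im_ofNat, Complex.re_ofNat, zero_mul, zero_div, zero_sub,
            Complex.add_im]
          have : 0 < 2 * (z1.im + z2.im) / Complex.normSq (z1 + z2) := by positivity
          linarith
        show 1 < w.re
        rw [hwz]
        simp only [Complex.add_re, Complex.one_re, Complex.mul_re, Complex.I_re, Complex.I_im,
          zero_mul, one_mul, zero_sub]
        linarith
      · intro hw
        simp only [Set.mem_setOf_eq] at hw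
        set F : ℂ := -Complex.I * (w - 1) with hFdef
        have hwF : w = ((1:ℝ):ℂ) + Complex.I * F := by
          rw [hFdef]; push_cast; linear_combination (w - 1) * Complex.I_sq
        have hFim : F.im = 1 - w.re := by
          rw [hFdef]; simp
        have hF0 : F ≠ 0 := by
          intro h
          rw [h] at hFim; simp at hFim; linarith
        have hzim : 0 < (F⁻¹).im := by
          rw [Complex.inv_im]
          have : 0 < Complex.normSq F := Complex.normSq_pos.2 hF0
          have : 0 < -F.im / Complex.normSq F := by
            apply div_pos _ this
            linarith
          linarith
        refine mem_of_root 1 w F F⁻¹ hwF hzim ?_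
        push_cast
        rw [show ((1:ℂ) - 1) = 0 by ring]
        field_simp
        norm_num
    rw [hAS]
    constructor
    · exact isOpen_lt continuous_const Complex.continuous_re
    · have hne : {w : ℂ | 1 < w.re}.Nonempty := ⟨2, by norm_num⟩
      haveI := (convex_halfSpace_re_gt (1:ℝ)).contractibleSpace hne
      infer_instance
  rcases eq_or_lt_of_le hxm with hx2 | hx2
  · -- x = -1
    have hx2' : x = -1 := hx2.symm
    subst hx2'
    have hAS : {w : ℂ | ∃ lam1 ∈ ball (0 : ℂ) 1, ∃ lam2 ∈ ball (0 : ℂ) 1,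
        w = (lam1 + lam2 - 2 * ((-1:ℝ) : ℂ)) / (lam1 * lam2 - 1)} = {w : ℂ | w.re < -1} := by
      ext w
      constructor
      · rintro ⟨l1, hl1, l2, hl2, hw⟩
        obtain ⟨z1, z2, i1, i2, heq⟩ := fwd (-1) l1 l2 (mem_ball_zero_iff.1 hl1) (mem_ball_zero_iff.1 hl2)
        have h12 : z1 + z2 ≠ 0 := by
          intro h
          have : (z1 + z2).im = 0 := by rw [h]; simp
          simp at this; linarith
        have hwz : w = -1 + Complex.I * ((2 * z1 * z2) / (z1 + z2)) := by
          rw [hw, heq]; push_cast; ring_nf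
        have hnsq : 0 < Complex.normSq (z1 + z2) := Complex.normSq_pos.2 h12
        have him : 0 < ((2 * z1 * z2) / (z1 + z2)).im := by
          rw [Complex.div_im]
          rw [div_sub_div_same, lt_div_iff₀ hnsq]
          simp only [Complex.mul_im, Complex.mul_re, Complex.add_re, Complex.add_im,
            Complex.re_ofNat, Complex.im_ofNat]
          nlinarith [mul_pos i2 (mul_pos i1 i1), mul_pos i1 (mul_pos i2 i2),
            mul_nonneg i2.le (sq_nonneg z1.re), mul_nonneg i1.le (sq_nonneg z2.re),
            mul_nonneg i2.le (mul_self_nonneg z1.re), mul_nonneg i1.le (mul_self_nonneg z2.re)]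
        show w.re < -1
        rw [hwz]
        simp only [Complex.add_re, Complex.mul_re, Complex.I_re, Complex.I_im,
          zero_mul, one_mul, zero_sub, Complex.neg_re, Complex.one_re]
        linarith
      · intro hw
        simp only [Set.mem_setOf_eq] at hw
        set F : ℂ := -Complex.I * (w - (-1)) with hFdef
        have hwF : w = ((-1:ℝ):ℂ) + Complex.I * F := by
          rw [hFdef]; push_cast; linear_combination (w + 1) * Complex.I_sq
        have hFim : 0 < F.im := by
          rw [hFdef]; simp; linarith
        refine mem_of_root (-1) w F F hwF hFim ?_
        push_cast
        ring
    rw [hAS]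
    constructor
    · exact isOpen_lt Complex.continuous_re continuous_const
    · have hne : {w : ℂ | w.re < -1}.Nonempty := ⟨-2, by norm_num⟩
      haveI := (convex_halfSpace_re_lt (-1:ℝ)).contractibleSpace hne
      infer_instance
  · -- -1 < x < 1
    have hAS : {w : ℂ | ∃ lam1 ∈ ball (0 : ℂ) 1, ∃ lam2 ∈ ball (0 : ℂ) 1,
        w = (lam1 + lam2 - 2 * (x : ℂ)) / (lam1 * lam2 - 1)}
        = {w : ℂ | w.re ≠ x ∨ w.im ^ 2 < 1 - x ^ 2} := by
      ext w
      constructor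
      · rintro ⟨l1, hl1, l2, hl2, hw⟩
        obtain ⟨z1, z2, i1, i2, heq⟩ := fwd x l1 l2 (mem_ball_zero_iff.1 hl1) (mem_ball_zero_iff.1 hl2)
        have h12 : z1 + z2 ≠ 0 := by
          intro h
          have : (z1 + z2).im = 0 := by rw [h]; simp
          simp at this; linarith
        by_cases hre : w.re = x
        · right
          set F : ℂ := ((1 - (x:ℂ)) * z1 * z2 + (1 + (x:ℂ))) / (z1 + z2) with hFdef
          have hwz : w = (x:ℂ) + Complex.I * F := by rw [hw, heq]
          have hFim : F.im = 0 := by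
            have := congrArg Complex.re hwz
            simp only [Complex.add_re, Complex.ofReal_re, Complex.mul_re, Complex.I_re,
              Complex.I_im, zero_mul, one_mul, zero_sub] at this
            rw [hre] at this
            linarith
          have hwim : w.im = F.re := by
            have := congrArg Complex.im hwz
            simp only [Complex.add_im, Complex.ofReal_im, Complex.mul_im, Complex.I_re,
              Complex.I_im, zero_mul, one_mul, zero_add] at this
            linarith
          have hFr : F = ((F.re : ℝ) : ℂ) := by
            apply Complex.ext <;> simp [hFim]
          have hFeq : (1 - (x:ℂ)) * z1 * z2 + (1 + (x:ℂ)) = ((F.re : ℝ) : ℂ) * (z1 + z2) := by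
            rw [← hFr, hFdef, div_mul_cancel₀ _ h12]
          have := key_lt x hx2 hx1 z1 z2 i1 i2 F.re hFeq
          rw [hwim]
          exact this
        · left; exact hre
      · intro hw
        simp only [Set.mem_setOf_eq] at hw
        set F : ℂ := -Complex.I * (w - (x:ℂ)) with hFdef
        have hwF : w = ((x:ℝ):ℂ) + Complex.I * F := by
          rw [hFdef]; linear_combination (w - (x:ℂ)) * Complex.I_sq
        have hFim : F.im = x - w.re := by rw [hFdef]; simp
        have hFre : F.re = w.im := by rw [hFdef]; simp
        by_cases hre : w.re = x
        · -- F real, use explicit root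
          have him2 : w.im ^ 2 < 1 - x ^ 2 := by
            rcases hw with h | h
            · exact absurd hre h
            · exact h
          set m : ℝ := w.im with hmdef
          set s : ℝ := Real.sqrt (1 - x^2 - m^2) with hsdef
          have hpos : 0 < 1 - x^2 - m^2 := by rw [hmdef]; linarith
          have hs2 : s^2 = 1 - x^2 - m^2 := Real.sq_sqrt hpos.le
          have hspos : 0 < s := Real.sqrt_pos.2 hpos
          have hax : (0:ℝ) < 1 - x := by linarith
          set z : ℂ := ((m / (1-x) : ℝ) : ℂ) + ((s / (1-x) : ℝ) : ℂ) * Complex.I with hzdef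
          have hzim : 0 < z.im := by
            rw [hzdef]
            simp only [Complex.add_im, Complex.ofReal_im, Complex.mul_im, Complex.ofReal_re,
              Complex.I_re, Complex.I_im, mul_one, mul_zero, add_zero, zero_add]
            exact div_pos hspos hax
          have hFm : F = ((m : ℝ) : ℂ) := by
            apply Complex.ext
            · rw [hFre, hmdef]; simp
            · rw [hFim, hre]; simp
          refine mem_of_root x w F z hwF hzim ?_
          rw [hFm, hzdef]
          have hs2c : ((s:ℝ):ℂ)^2 = 1 - ((x:ℝ):ℂ)^2 - ((m:ℝ):ℂ)^2 := by
            exact_mod_cast congrArg (fun r : ℝ => (r : ℂ)) hs2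
          have h1x : ((1:ℂ) - (x:ℂ)) ≠ 0 := by
            intro h
            have := congrArg Complex.re h
            simp at this; linarith
          push_cast
          field_simp
          linear_combination (Complex.I^2) * hs2c
            + ((1-(x:ℂ)^2-((m:ℝ):ℂ)^2)) * Complex.I_sq
        · have hFim0 : F.im ≠ 0 := by rw [hFim]; intro h; apply hre; linarith
          obtain ⟨z, hzim, heq⟩ := root_exists x hx2 hx1 F hFim0
          exact mem_of_root x w F z hwF hzim heq
    rw [hAS]
    have hopen : IsOpen {w : ℂ | w.re ≠ x ∨ w.im ^ 2 < 1 - x ^ 2} := by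
      have : {w : ℂ | w.re ≠ x ∨ w.im ^ 2 < 1 - x ^ 2}
          = {w : ℂ | w.re ≠ x} ∪ {w : ℂ | w.im ^ 2 < 1 - x ^ 2} := by
        ext w; simp [Set.mem_union]
      rw [this]
      exact (isOpen_ne_fun Complex.continuous_re continuous_const).union
        (isOpen_lt (by fun_prop) continuous_const)
    have hstar : StarConvex ℝ ((x:ℝ):ℂ) {w : ℂ | w.re ≠ x ∨ w.im ^ 2 < 1 - x ^ 2} := by
      intro y hy a b ha hb hab
      simp only [Set.mem_setOf_eq] at hy ⊢
      rw [Complex.real_smul, Complex.real_smul]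
      by_cases hb0 : b = 0
      · right
        subst hb0
        simp only [Complex.add_im, Complex.mul_im, Complex.ofReal_re, Complex.ofReal_im,
          Complex.add_re, Complex.mul_re]
        ring_nf
        nlinarith
      · have hbpos : 0 < b := lt_of_le_of_ne hb (Ne.symm hb0)
        by_cases hyre : y.re = x
        · right
          rcases hy with h | h
          · exact absurd hyre h
          · simp only [Complex.add_im, Complex.mul_im, Complex.ofReal_re, Complex.ofReal_im,
              Complex.add_re, Complex.mul_re]
            ring_nf
            have hb1 : b ≤ 1 := by linarith
            have hb2 : b^2 ≤ 1 := by nlinarith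
            nlinarith [mul_nonneg (sub_nonneg.2 hb2) (sq_nonneg y.im)]
        · left
          simp only [Complex.add_re, Complex.mul_re, Complex.ofReal_re, Complex.ofReal_im]
          intro h
          apply hyre
          have hax : a = 1 - b := by linarith
          ring_nf at h
          rw [hax] at h
          have : b * (y.re - x) = 0 := by ring_nf; ring_nf at h; linarith
          rcases mul_eq_zero.1 this with h' | h'
          · exact absurd h' hb0
          · linarith
    constructor
    · exact hopen
    · have hne : {w : ℂ | w.re ≠ x ∨ w.im ^ 2 < 1 - x ^ 2}.Nonempty := by
        refine ⟨((x:ℝ):ℂ), Or.inr ?_⟩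
        simp only [Complex.ofReal_im]
        nlinarith
      haveI := hstar.contractibleSpace hne
      infer_instance
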